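/- Let R be a principal ideal domain and let A be an alternating n × n matrix over R (A is antisymmetric, Aᵀ = −A, and every diagonal entry of A is 0). Then there exists an invertible n × n matrix B over R such that S = Bᵀ * A * B is block-diagonal with 2 × 2 diagonal blocks of the form ((0, a_i), (−a_i, 0)) (possibly followed by zero blocks/rows), and a_i divides a_{i+1} for each i; that is, S_{2i,2i+1} divides S_{2i+2,2i+3} (indexing blocks from 0). -/

import Mathlib

open Matrix
open Finset




section PL
variable {R : Type*} [CommRing R] {n : ℕ}

lemma sum_two_support {p q : Fin n} (hpq : p ≠ q) (f : Fin n → R)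
    (h : ∀ k, k ≠ p → k ≠ q → f k = 0) : ∑ k, f k = f p + f q := by
  classical
  rw [← Finset.sum_pair hpq]
  refine (Finset.sum_subset (Finset.subset_univ _) ?_).symm
  intro k _ hk
  simp only [Finset.mem_insert, Finset.mem_singleton, not_or] at hk
  exact h k hk.1 hk.2

lemma sum_one_support {p : Fin n} (f : Fin n → R)
    (h : ∀ k, k ≠ p → f k = 0) : ∑ k, f k = f p := by
  classical
  rw [← Finset.sum_singleton f p]
  refine (Finset.sum_subset (Finset.subset_univ _) ?_).symm
  intro k _ hk
  exact h k (Finset.notMem_singleton.mp hk)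

/-- identity except a 2×2 block [[x,y],[z,w]] at rows/cols p,q -/
def pl (p q : Fin n) (x y z w : R) : Matrix (Fin n) (Fin n) R :=
  fun i j =>
    if i = p then (if j = p then x else if j = q then y else 0)
    else if i = q then (if j = p then z else if j = q then w else 0)
    else if i = j then 1 else 0

lemma pl_mul_apply {p q : Fin n} (hpq : p ≠ q) (x y z w : R)
    (M : Matrix (Fin n) (Fin n) R) (i j : Fin n) :
    (pl p q x y z w * M) i j =
      if i = p then x * M p j + y * M q j
      else if i = q then z * M p j + w * M q j else M i j := by
  rw [mul_apply]
  by_cases h1 : i = p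
  · rw [if_pos h1]
    rw [sum_two_support hpq _ (fun k hk1 hk2 => by
      simp [pl, h1, hpq, Ne.symm hpq, hk1, hk2, Ne.symm hk1, Ne.symm hk2])]
    simp [pl, h1, hpq, Ne.symm hpq]
  · rw [if_neg h1]
    by_cases h2 : i = q
    · rw [if_pos h2]
      rw [sum_two_support hpq _ (fun k hk1 hk2 => by
        simp [pl, h1, h2, hpq, Ne.symm hpq, hk1, hk2, Ne.symm hk1, Ne.symm hk2])]
      simp [pl, h1, h2, hpq, Ne.symm hpq]
    · rw [sum_one_support (p := i) _ (fun k hk => by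
        simp [pl, h1, h2, Ne.symm hk, hk])]
      simp [pl, h1, h2]

lemma mul_pl_apply {p q : Fin n} (hpq : p ≠ q) (x y z w : R)
    (M : Matrix (Fin n) (Fin n) R) (i j : Fin n) :
    (M * pl p q x y z w) i j =
      if j = p then M i p * x + M i q * z
      else if j = q then M i p * y + M i q * w else M i j := by
  rw [mul_apply]
  by_cases h1 : j = p
  · rw [if_pos h1]
    rw [sum_two_support hpq _ (fun k hk1 hk2 => by
      simp [pl, h1, hpq, Ne.symm hpq, hk1, hk2, Ne.symm hk1, Ne.symm hk2])]
    simp [pl, h1, hpq, Ne.symm hpq]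
  · rw [if_neg h1]
    by_cases h2 : j = q
    · rw [if_pos h2]
      rw [sum_two_support hpq _ (fun k hk1 hk2 => by
        simp [pl, h1, h2, hpq, Ne.symm hpq, hk1, hk2, Ne.symm hk1, Ne.symm hk2])]
      simp [pl, h1, h2, hpq, Ne.symm hpq]
    · rw [sum_one_support (p := j) _ (fun k hk => by
        simp [pl, h1, h2, hk, Ne.symm hk])]
      simp [pl, h1, h2]

lemma pl_transpose (p q : Fin n) (x y z w : R) :
    (pl p q x y z w)ᵀ = pl p q x z y w := by
  ext i j
  simp only [transpose_apply, pl]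
  by_cases h1 : i = p <;> by_cases h2 : j = p <;>
    by_cases h3 : i = q <;> by_cases h4 : j = q <;>
      simp_all [eq_comm]

lemma isUnit_pl_det {p q : Fin n} (hpq : p ≠ q) {x y z w : R}
    (hdet : x * w - y * z = 1) : IsUnit (pl p q x y z w).det := by
  apply Matrix.isUnit_det_of_right_inverse (B := pl p q w (-y) (-z) x)
  ext i j
  rw [pl_mul_apply hpq]
  simp only [pl, one_apply]
  by_cases h1 : i = p <;> by_cases h2 : j = p <;>
    by_cases h3 : i = q <;> by_cases h4 : j = q <;>
      simp_all [eq_comm] <;> ring_nf <;> linear_combination hdet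
end PL
section CONJ
variable {R : Type*} [CommRing R] {n : ℕ}

lemma conj_assoc (A E C : Matrix (Fin n) (Fin n) R) :
    (E * C)ᵀ * A * (E * C) = Cᵀ * (Eᵀ * A * E) * C := by
  rw [transpose_mul]; simp only [mul_assoc]

lemma conj_transpose_neg {A : Matrix (Fin n) (Fin n) R} (hanti : Aᵀ = -A)
    (B : Matrix (Fin n) (Fin n) R) : (Bᵀ * A * B)ᵀ = -(Bᵀ * A * B) := by
  rw [transpose_mul, transpose_mul, transpose_transpose, hanti]
  simp only [Matrix.neg_mul, Matrix.mul_neg, mul_assoc]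

lemma conj_apply_symm {A : Matrix (Fin n) (Fin n) R} (hanti : Aᵀ = -A)
    (B : Matrix (Fin n) (Fin n) R) (i j : Fin n) :
    (Bᵀ * A * B) j i = -(Bᵀ * A * B) i j := by
  have := congrFun (congrFun (conj_transpose_neg hanti B) i) j
  simpa [transpose_apply] using this

lemma conj_diag_zero {A : Matrix (Fin n) (Fin n) R} (hanti : Aᵀ = -A)
    (hdiag : ∀ i, A i i = 0) (B : Matrix (Fin n) (Fin n) R) (i : Fin n) :
    (Bᵀ * A * B) i i = 0 := by
  rw [mul_apply]
  have : ∀ l : Fin n, (Bᵀ * A) i l * B l i = ∑ k, B k i * A k l * B l i := by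
    intro l
    rw [mul_apply, Finset.sum_mul]
    simp [transpose_apply]
  rw [Finset.sum_congr rfl fun l _ => this l]
  rw [← Finset.sum_product']
  apply Finset.sum_ninvolution (g := Prod.swap)
  · intro ⟨k, l⟩
    have hA : A l k = - A k l := by
      have := congrFun (congrFun hanti k) l
      simpa [transpose_apply] using this
    simp only [Prod.swap]
    rw [hA]; ring
  · intro ⟨k, l⟩ hf
    intro h
    rw [Prod.ext_iff] at h
    obtain ⟨h1, -⟩ := h
    simp only [Prod.fst_swap] at h1
    apply hf
    simp only [h1, hdiag]
    ring
  · intro a; exact Finset.mem_univ _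
  · intro a; exact Prod.swap_swap a

end CONJ
section ROWU
variable {R : Type*} [CommRing R] {n : ℕ}

lemma sum_one_support' {p : Fin n} (f : Fin n → R)
    (h : ∀ k, k ≠ p → f k = 0) : ∑ k, f k = f p := by
  classical
  rw [← Finset.sum_singleton f p]
  refine (Finset.sum_subset (Finset.subset_univ _) ?_).symm
  intro k _ hk
  exact h k (Finset.notMem_singleton.mp hk)

variable {r : Fin n} {u : Matrix (Fin n) (Fin n) R}
  (hu : ∀ i j, i ≠ r → u i j = 0) (hur : u r r = 0)

include hu hur in
lemma isUnit_one_add_row_det : IsUnit ((1 + u).det) := by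
  apply Matrix.isUnit_det_of_right_inverse (B := 1 - u)
  have huu : u * u = 0 := by
    ext i j
    rw [mul_apply]
    rw [sum_one_support' (p := r) _ (fun k hk => by rw [hu k j hk, mul_zero])]
    by_cases hi : i = r
    · rw [hi, hur, zero_mul]; rfl
    · rw [hu i r hi, zero_mul]; rfl
  have : (1 + u) * (1 - u) = 1 + u - u - u * u := by
    noncomm_ring
  rw [this, huu]
  abel

lemma mul_row_apply (A : Matrix (Fin n) (Fin n) R) (i j : Fin n)
    (hu : ∀ i j, i ≠ r → u i j = 0) : (A * u) i j = A i r * u r j := by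
  rw [mul_apply]
  exact sum_one_support' (p := r) _ (fun k hk => by rw [hu k j hk, mul_zero])

lemma row_transpose_mul_apply (A : Matrix (Fin n) (Fin n) R) (i j : Fin n)
    (hu : ∀ i j, i ≠ r → u i j = 0) : (uᵀ * A) i j = u r i * A r j := by
  rw [mul_apply]
  exact sum_one_support' (p := r) _
    (fun k hk => by rw [transpose_apply, hu k i hk, zero_mul])

include hu hur in
lemma conj_one_add_row_apply (A : Matrix (Fin n) (Fin n) R) (hArr : A r r = 0)
    (i j : Fin n) :
    (((1 + u)ᵀ * A * (1 + u) : Matrix (Fin n) (Fin n) R)) i j = A i j + u r i * A r j + A i r * u r j := by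
  have expand : (1 + u)ᵀ * A * (1 + u) = A + uᵀ * A + A * u + uᵀ * A * u := by
    rw [transpose_add, transpose_one]
    noncomm_ring
  rw [expand]
  have h3 : (uᵀ * A * u) i j = 0 := by
    rw [mul_row_apply _ _ _ hu, row_transpose_mul_apply _ _ _ hu, hArr]
    ring
  simp only [Matrix.add_apply, h3, mul_row_apply _ i j hu,
    row_transpose_mul_apply _ i j hu, add_zero]
end ROWU


section CORE
variable {R : Type*} [CommRing R] [IsDomain R] [IsPrincipalIdealRing R]

lemma bezout_aux {a b : R} (ha : a ≠ 0) (hb : ¬ a ∣ b) :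
    ∃ g x y a₁ b₁ : R, g ≠ 0 ∧ Ideal.span {a} < Ideal.span {g} ∧
      x * a + y * b = g ∧ x * a₁ + y * b₁ = 1 ∧ a = g * a₁ ∧ b = g * b₁ := by
  obtain ⟨g, hg⟩ := Submodule.IsPrincipal.principal (Ideal.span ({a, b} : Set R))
  have hg' : Ideal.span ({a, b} : Set R) = Ideal.span ({g} : Set R) := by
    rw [hg]
  have hga : g ∣ a := Ideal.mem_span_singleton.mp (hg' ▸ Ideal.subset_span (by simp))
  have hgb : g ∣ b := Ideal.mem_span_singleton.mp (hg' ▸ Ideal.subset_span (by simp))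
  have hgI : g ∈ Ideal.span ({a, b} : Set R) := by
    rw [hg']; exact Ideal.mem_span_singleton.mpr dvd_rfl
  obtain ⟨x, y, hbez⟩ := Ideal.mem_span_pair.mp hgI
  obtain ⟨a₁, ha₁⟩ := hga
  obtain ⟨b₁, hb₁⟩ := hgb
  have hg0 : g ≠ 0 := by rintro rfl; rw [zero_mul] at ha₁; exact ha ha₁
  have h1 : x * a₁ + y * b₁ = 1 := by
    apply mul_left_cancel₀ hg0
    rw [mul_one]
    calc g * (x * a₁ + y * b₁) = x * a + y * b := by rw [ha₁, hb₁]; ring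
    _ = g := hbez
  have hlt : Ideal.span ({a} : Set R) < Ideal.span ({g} : Set R) := by
    apply lt_of_le_of_ne (Ideal.span_singleton_le_span_singleton.mpr ⟨a₁, ha₁⟩)
    intro hEq
    apply hb
    have hbg : b ∈ Ideal.span ({g} : Set R) := Ideal.mem_span_singleton.mpr ⟨b₁, hb₁⟩
    rw [← hEq] at hbg
    exact Ideal.mem_span_singleton.mp hbg
  exact ⟨g, x, y, a₁, b₁, hg0, hlt, hbez, h1, ha₁, hb₁⟩

variable {m : ℕ}

lemma fzero_ne_one : (0 : Fin (m + 2)) ≠ 1 := by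
  simp [Fin.ext_iff]

lemma fin_ge_two {k : Fin (m + 2)} (h : 2 ≤ (k : ℕ)) : k ≠ 0 ∧ k ≠ 1 := by
  constructor <;> (intro hk; rw [hk] at h; simp at h)

/-- corner normal form predicate -/
def Corner (M : Matrix (Fin (m + 2)) (Fin (m + 2)) R) : Prop :=
  (∀ k : Fin (m + 2), 2 ≤ (k : ℕ) → M 0 k = 0 ∧ M 1 k = 0) ∧
    ∀ i j, M 0 1 ∣ M i j

lemma corner_step {A E : Matrix (Fin (m + 2)) (Fin (m + 2)) R} (hE : IsUnit E.det)
    (h : ∃ C, IsUnit C.det ∧ Corner (Cᵀ * (Eᵀ * A * E) * C)) :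
    ∃ C, IsUnit C.det ∧ Corner (Cᵀ * A * C) := by
  obtain ⟨C, hC, hc⟩ := h
  exact ⟨E * C, by rw [Matrix.det_mul]; exact hE.mul hC, by rw [conj_assoc]; exact hc⟩

lemma reduce : ∀ a : R, a ≠ 0 → ∀ A : Matrix (Fin (m + 2)) (Fin (m + 2)) R,
    Aᵀ = -A → (∀ i, A i i = 0) → A 0 1 = a →
    ∃ C, IsUnit C.det ∧ Corner (Cᵀ * A * C) := by
  have wf : WellFounded (fun x y : R => Ideal.span ({y} : Set R) < Ideal.span ({x} : Set R)) :=
    InvImage.wf (fun a => Ideal.span ({a} : Set R)) (IsWellFounded.wf (r := (· > ·)))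
  intro a
  induction a using WellFounded.induction wf with
  | _ a IH =>
  intro ha A hanti hdiag ha01
  classical
  have hAsym : ∀ (M : Matrix (Fin (m+2)) (Fin (m+2)) R), Mᵀ = -M → ∀ i j, M j i = -M i j := by
    intro M hM i j
    have := congrFun (congrFun hM i) j
    simpa [transpose_apply] using this
  have key1 : ∀ A' : Matrix (Fin (m + 2)) (Fin (m + 2)) R, A'ᵀ = -A' →
      (∀ i, A' i i = 0) → A' 0 1 = a → (∃ k, ¬ a ∣ A' 0 k ∨ ¬ a ∣ A' 1 k) →
      ∃ C, IsUnit C.det ∧ Corner (Cᵀ * A' * C) := by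
    rintro A' hA't hA'd hA'01 ⟨k, hk | hk⟩
    · have hk0 : k ≠ 0 := by rintro rfl; exact hk (by rw [hA'd 0]; exact dvd_zero a)
      have hk1 : k ≠ 1 := by rintro rfl; exact hk (by rw [hA'01])
      obtain ⟨g, x, y, a₁, b₁, hg0, hlt, hbez, h1, hga, hgb⟩ := bezout_aux ha hk
      apply corner_step (E := pl 1 k x (-b₁) y a₁)
        (isUnit_pl_det (Ne.symm hk1) (by linear_combination h1))
      apply IH g hlt hg0 _ (conj_transpose_neg hA't _) (conj_diag_zero hA't hA'd _)
      rw [pl_transpose]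
      rw [mul_pl_apply (Ne.symm hk1), if_pos rfl,
        pl_mul_apply (Ne.symm hk1), pl_mul_apply (Ne.symm hk1)]
      rw [if_neg fzero_ne_one, if_neg (Ne.symm hk0), if_neg fzero_ne_one,
        if_neg (Ne.symm hk0), hA'01]
      linear_combination hbez
    · have hk0 : k ≠ 0 := by
        rintro rfl
        exact hk (by rw [hAsym A' hA't 0 1, hA'01]; exact dvd_neg.mpr dvd_rfl)
      have hk1 : k ≠ 1 := by rintro rfl; exact hk (by rw [hA'd 1]; exact dvd_zero a)
      obtain ⟨g, x, y, a₁, b₁, hg0, hlt, hbez, h1, hga, hgb⟩ := bezout_aux ha hk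
      apply corner_step (E := pl 0 k x b₁ (-y) a₁)
        (isUnit_pl_det (Ne.symm hk0) (by linear_combination h1))
      apply IH g hlt hg0 _ (conj_transpose_neg hA't _) (conj_diag_zero hA't hA'd _)
      rw [pl_transpose]
      rw [mul_pl_apply (Ne.symm hk0), if_neg (Ne.symm fzero_ne_one), if_neg (Ne.symm hk1),
        pl_mul_apply (Ne.symm hk0), if_pos rfl]
      rw [hAsym A' hA't 1 k, hA'01]
      linear_combination hbez
  by_cases hall : ∀ k, a ∣ A 0 k ∧ a ∣ A 1 k
  · have hex1 : ∀ k, ∃ ck, A 0 k = a * ck := fun k => (hall k).1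
    choose c hc using hex1
    set u₁ : Matrix (Fin (m + 2)) (Fin (m + 2)) R :=
      fun i j => if i = 1 ∧ j ≠ 0 ∧ j ≠ 1 then -(c j) else 0 with hu₁def
    have hu₁ : ∀ i j, i ≠ (1 : Fin (m + 2)) → u₁ i j = 0 := by
      intro i j h; simp [hu₁def, h]
    have hu₁1 : u₁ 1 1 = 0 := by simp [hu₁def]
    have hu₁0 : u₁ 1 0 = 0 := by simp [hu₁def]
    have hE₁ : IsUnit ((1 + u₁).det) := isUnit_one_add_row_det hu₁ hu₁1
    set M₁ : Matrix (Fin (m + 2)) (Fin (m + 2)) R := (1 + u₁)ᵀ * A * (1 + u₁) with hM₁def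
    have hM₁ : ∀ i j, M₁ i j = A i j + u₁ 1 i * A 1 j + A i 1 * u₁ 1 j := fun i j => by
      rw [hM₁def]; exact conj_one_add_row_apply hu₁ hu₁1 A (hdiag 1) i j
    have hM₁t : M₁ᵀ = -M₁ := by rw [hM₁def]; exact conj_transpose_neg hanti _
    have hM₁d : ∀ i, M₁ i i = 0 := fun i => by
      rw [hM₁def]; exact conj_diag_zero hanti hdiag _ i
    have hM₁01 : M₁ 0 1 = a := by
      rw [hM₁ 0 1, hu₁0, hu₁1, ha01]; ring
    have hM₁0k : ∀ k : Fin (m + 2), k ≠ 0 → k ≠ 1 → M₁ 0 k = 0 := by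
      intro k h0 h1'
      have e2 : u₁ 1 k = -(c k) := by simp [hu₁def, h0, h1']
      rw [hM₁ 0 k, hu₁0, e2, ha01, hc k]; ring
    have hM₁1 : ∀ j, M₁ 1 j = A 1 j := by
      intro j
      rw [hM₁ 1 j, hu₁1, hdiag 1]; ring
    have hex2 : ∀ k, ∃ dk, M₁ 1 k = a * dk := fun k => by
      rw [hM₁1 k]; exact (hall k).2
    choose d hd using hex2
    set u₂ : Matrix (Fin (m + 2)) (Fin (m + 2)) R :=
      fun i j => if i = 0 ∧ j ≠ 0 ∧ j ≠ 1 then d j else 0 with hu₂def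
    have hu₂ : ∀ i j, i ≠ (0 : Fin (m + 2)) → u₂ i j = 0 := by
      intro i j h; simp [hu₂def, h]
    have hu₂0 : u₂ 0 0 = 0 := by simp [hu₂def]
    have hu₂1 : u₂ 0 1 = 0 := by simp [hu₂def]
    have hE₂ : IsUnit ((1 + u₂).det) := isUnit_one_add_row_det hu₂ hu₂0
    set M₂ : Matrix (Fin (m + 2)) (Fin (m + 2)) R := (1 + u₂)ᵀ * M₁ * (1 + u₂) with hM₂def
    have hM₂ : ∀ i j, M₂ i j = M₁ i j + u₂ 0 i * M₁ 0 j + M₁ i 0 * u₂ 0 j := fun i j => by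
      rw [hM₂def]; exact conj_one_add_row_apply hu₂ hu₂0 M₁ (hM₁d 0) i j
    have hM₂t : M₂ᵀ = -M₂ := by rw [hM₂def]; exact conj_transpose_neg hM₁t _
    have hM₂d : ∀ i, M₂ i i = 0 := fun i => by
      rw [hM₂def]; exact conj_diag_zero hM₁t hM₁d _ i
    have hM₂sym : ∀ i j, M₂ j i = -M₂ i j := hAsym M₂ hM₂t
    have hM₁10 : M₁ 1 0 = -a := by rw [hAsym M₁ hM₁t 0 1, hM₁01]
    have hM₂01 : M₂ 0 1 = a := by
      rw [hM₂ 0 1, hu₂0, hu₂1, hM₁d 0, hM₁01]; ring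
    have hM₂0k : ∀ k : Fin (m + 2), k ≠ 0 → k ≠ 1 → M₂ 0 k = 0 := by
      intro k h0 h1'
      rw [hM₂ 0 k, hu₂0, hM₁d 0, hM₁0k k h0 h1']; ring
    have hM₂1k : ∀ k : Fin (m + 2), k ≠ 0 → k ≠ 1 → M₂ 1 k = 0 := by
      intro k h0 h1'
      have e2 : u₂ 0 k = d k := by simp [hu₂def, h0, h1']
      rw [hM₂ 1 k, hu₂1, e2, hM₁10, hd k]; ring
    by_cases hfin : ∀ i j, a ∣ M₂ i j
    · refine corner_step hE₁ ?_
      rw [← hM₁def]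
      refine corner_step hE₂ ?_
      rw [← hM₂def]
      refine ⟨1, by simp, ?_⟩
      rw [transpose_one, Matrix.one_mul, Matrix.mul_one]
      constructor
      · intro k hk2
        obtain ⟨k0, k1⟩ := fin_ge_two hk2
        exact ⟨hM₂0k k k0 k1, hM₂1k k k0 k1⟩
      · intro i j
        rw [hM₂01]; exact hfin i j
    · obtain ⟨i, hi⟩ := not_forall.mp hfin
      obtain ⟨j, hbad⟩ := not_forall.mp hi
      have hrow0 : ∀ t, a ∣ M₂ 0 t := by
        intro t
        by_cases h0 : t = 0
        · rw [h0, hM₂d 0]; exact dvd_zero a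
        · by_cases h1' : t = 1
          · rw [h1', hM₂01]
          · rw [hM₂0k t h0 h1']; exact dvd_zero a
      have hrow1 : ∀ t, a ∣ M₂ 1 t := by
        intro t
        by_cases h0 : t = 0
        · rw [h0, hM₂sym 0 1, hM₂01]; exact dvd_neg.mpr dvd_rfl
        · by_cases h1' : t = 1
          · rw [h1', hM₂d 1]; exact dvd_zero a
          · rw [hM₂1k t h0 h1']; exact dvd_zero a
      have hi0 : i ≠ 0 := by rintro rfl; exact hbad (hrow0 j)
      have hi1 : i ≠ 1 := by rintro rfl; exact hbad (hrow1 j)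
      have hj0 : j ≠ 0 := by
        rintro rfl; exact hbad (by rw [hM₂sym 0 i]; exact dvd_neg.mpr (hrow0 i))
      have hj1 : j ≠ 1 := by
        rintro rfl; exact hbad (by rw [hM₂sym 1 i]; exact dvd_neg.mpr (hrow1 i))
      set u₃ : Matrix (Fin (m + 2)) (Fin (m + 2)) R :=
        fun s t => if s = i ∧ t = 0 then (1 : R) else 0 with hu₃def
      have hu₃ : ∀ s t, s ≠ i → u₃ s t = 0 := by
        intro s t h; simp [hu₃def, h]
      have hu₃ii : u₃ i i = 0 := by simp [hu₃def, hi0]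
      have hu₃i0 : u₃ i 0 = 1 := by simp [hu₃def]
      have hu₃i1 : u₃ i 1 = 0 := by simp [hu₃def, Ne.symm fzero_ne_one]
      have hu₃ij : u₃ i j = 0 := by simp [hu₃def, hj0]
      have hE₃ : IsUnit ((1 + u₃).det) := isUnit_one_add_row_det hu₃ hu₃ii
      set M₃ : Matrix (Fin (m + 2)) (Fin (m + 2)) R := (1 + u₃)ᵀ * M₂ * (1 + u₃) with hM₃def
      have hM₃ : ∀ s t, M₃ s t = M₂ s t + u₃ i s * M₂ i t + M₂ s i * u₃ i t := fun s t => by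
        rw [hM₃def]; exact conj_one_add_row_apply hu₃ hu₃ii M₂ (hM₂d i) s t
      have hM₃t : M₃ᵀ = -M₃ := by rw [hM₃def]; exact conj_transpose_neg hM₂t _
      have hM₃d : ∀ s, M₃ s s = 0 := fun s => by
        rw [hM₃def]; exact conj_diag_zero hM₂t hM₂d _ s
      have hM₂i1 : M₂ i 1 = 0 := by rw [hM₂sym 1 i, hM₂1k i hi0 hi1]; ring
      have hM₃01 : M₃ 0 1 = a := by
        rw [hM₃ 0 1, hu₃i0, hu₃i1, hM₂i1, hM₂01]; ring
      have hM₃0j : M₃ 0 j = M₂ i j := by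
        rw [hM₃ 0 j, hu₃i0, hu₃ij, hM₂0k j hj0 hj1]; ring
      refine corner_step hE₁ ?_
      rw [← hM₁def]
      refine corner_step hE₂ ?_
      rw [← hM₂def]
      refine corner_step hE₃ ?_
      rw [← hM₃def]
      exact key1 M₃ hM₃t hM₃d hM₃01 ⟨j, Or.inl (by rw [hM₃0j]; exact hbad)⟩
  · obtain ⟨k, hk⟩ := not_forall.mp hall
    rw [not_and_or] at hk
    exact key1 A hanti hdiag ha01 ⟨k, hk⟩


end CORE

section PERM
variable {R : Type*} [CommRing R] {n : ℕ}

lemma alt_apply_symm {M : Matrix (Fin n) (Fin n) R} (h : Mᵀ = -M) (i j : Fin n) :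
    M j i = -M i j := by
  have := congrFun (congrFun h i) j
  simpa [transpose_apply] using this

lemma mul_one_submatrix (τ : Equiv.Perm (Fin n)) (M : Matrix (Fin n) (Fin n) R) (i j : Fin n) :
    (M * (1 : Matrix (Fin n) (Fin n) R).submatrix id ⇑τ) i j = M i (τ j) := by
  rw [mul_apply]
  rw [sum_one_support (p := τ j) _ (fun k hk => by
    rw [submatrix_apply, id_eq, one_apply_ne hk, mul_zero])]
  rw [submatrix_apply, id_eq, one_apply_eq, mul_one]

lemma one_submatrix_transpose_mul (τ : Equiv.Perm (Fin n)) (M : Matrix (Fin n) (Fin n) R)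
    (i j : Fin n) :
    (((1 : Matrix (Fin n) (Fin n) R).submatrix id ⇑τ)ᵀ * M) i j = M (τ i) j := by
  rw [mul_apply]
  rw [sum_one_support (p := τ i) _ (fun k hk => by
    rw [transpose_apply, submatrix_apply, id_eq, one_apply_ne hk, zero_mul])]
  rw [transpose_apply, submatrix_apply, id_eq, one_apply_eq, one_mul]

lemma dvd_entries_conj {a : R} {M : Matrix (Fin n) (Fin n) R}
    (h : ∀ i j, a ∣ M i j) (X Y : Matrix (Fin n) (Fin n) R) (i j : Fin n) :
    a ∣ (X * M * Y) i j := by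
  rw [mul_apply]
  apply Finset.dvd_sum
  intro l _
  apply Dvd.dvd.mul_right
  rw [mul_apply]
  apply Finset.dvd_sum
  intro k _
  exact (h k l).mul_left _

end PERM

section CORNER
variable {R : Type*} [CommRing R] [IsDomain R] [IsPrincipalIdealRing R] {m : ℕ}

lemma corner (A : Matrix (Fin (m + 2)) (Fin (m + 2)) R) (hanti : Aᵀ = -A)
    (hdiag : ∀ i, A i i = 0) :
    ∃ C, IsUnit C.det ∧ Corner (Cᵀ * A * C) := by
  classical
  by_cases hA : A = 0
  · refine ⟨1, by simp, ?_⟩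
    subst hA
    rw [transpose_one, Matrix.one_mul, Matrix.mul_one]
    exact ⟨fun k _ => ⟨rfl, rfl⟩, fun i j => dvd_zero _⟩
  · have hex : ∃ i j, A i j ≠ 0 := by
      by_contra h
      push_neg at h
      exact hA (by ext i j; rw [h i j]; rfl)
    obtain ⟨i, j, hij⟩ := hex
    have hne : i ≠ j := by rintro rfl; exact hij (hdiag i)
    set σ₁ : Equiv.Perm (Fin (m + 2)) := Equiv.swap 0 i with hσ₁def
    have hj' : σ₁ j ≠ 0 := by
      intro h
      apply hne
      have h2 := congrArg σ₁ h
      rw [hσ₁def, Equiv.swap_apply_self, Equiv.swap_apply_left] at h2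
      exact h2.symm ▸ rfl
    set σ : Equiv.Perm (Fin (m + 2)) := (Equiv.swap 1 (σ₁ j)).trans σ₁ with hσdef
    have hσ0 : σ 0 = i := by
      rw [hσdef]
      show σ₁ (Equiv.swap 1 (σ₁ j) 0) = i
      rw [Equiv.swap_apply_of_ne_of_ne fzero_ne_one (Ne.symm hj'), hσ₁def]
      exact Equiv.swap_apply_left 0 i
    have hσ1 : σ 1 = j := by
      rw [hσdef]
      show σ₁ (Equiv.swap 1 (σ₁ j) 1) = j
      rw [Equiv.swap_apply_left, hσ₁def, Equiv.swap_apply_self]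
    set P : Matrix (Fin (m + 2)) (Fin (m + 2)) R := (1 : Matrix _ _ R).submatrix id ⇑σ
      with hPdef
    have hPA : ∀ s t, (Pᵀ * A * P) s t = A (σ s) (σ t) := by
      intro s t
      rw [hPdef, mul_one_submatrix σ (((1 : Matrix _ _ R).submatrix id ⇑σ)ᵀ * A) s t,
        one_submatrix_transpose_mul]
    have hPdet : IsUnit P.det := by
      apply Matrix.isUnit_det_of_right_inverse
        (B := (1 : Matrix (Fin (m + 2)) (Fin (m + 2)) R).submatrix id ⇑σ.symm)
      ext s t
      have : (P * (1 : Matrix (Fin (m + 2)) (Fin (m + 2)) R).submatrix id ⇑σ.symm) s t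
          = P s (σ.symm t) := by
        have h2 := mul_one_submatrix (σ.symm) P s t
        simpa using h2
      rw [this, hPdef, submatrix_apply, id_eq, Equiv.apply_symm_apply]
    have h01 : (Pᵀ * A * P) 0 1 = A i j := by rw [hPA 0 1, hσ0, hσ1]
    obtain ⟨C, hC, hc⟩ := reduce (A i j) hij (Pᵀ * A * P)
      (conj_transpose_neg hanti P) (conj_diag_zero hanti hdiag P) h01
    exact corner_step hPdet ⟨C, hC, hc⟩

end CORNER

section MAIN
variable {R : Type*} [CommRing R] [IsDomain R] [IsPrincipalIdealRing R]

lemma main_lemma : ∀ (n : ℕ) (A : Matrix (Fin n) (Fin n) R), Aᵀ = -A → (∀ i, A i i = 0) →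
    ∃ B : Matrix (Fin n) (Fin n) R, IsUnit B.det ∧
      (∀ i j : Fin n, (Bᵀ * A * B) i j ≠ 0 →
        ((i : ℕ) / 2 = (j : ℕ) / 2 ∧ (i : ℕ) ≠ (j : ℕ))) ∧
      (∀ t : ℕ, ∀ (h0 : 2 * t < n) (h1 : 2 * t + 1 < n)
        (h2 : 2 * t + 2 < n) (h3 : 2 * t + 3 < n),
        (Bᵀ * A * B) ⟨2 * t, h0⟩ ⟨2 * t + 1, h1⟩ ∣
          (Bᵀ * A * B) ⟨2 * t + 2, h2⟩ ⟨2 * t + 3, h3⟩) := by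
  intro n
  induction n using Nat.strong_induction_on with
  | _ n IHn => ?_
  rcases n with _ | _ | m
  · intro A _ _
    exact ⟨1, by simp, fun i j _ => i.elim0, fun t h0 => by omega⟩
  · intro A hanti hdiag
    refine ⟨1, by simp, ?_, fun t h0 h1 => by omega⟩
    intro i j hne
    exfalso
    apply hne
    have hij : i = j := Fin.ext (by omega)
    rw [transpose_one, Matrix.one_mul, Matrix.mul_one, hij, hdiag]
  intro A hanti hdiag
  classical
  obtain ⟨C, hC, hCor⟩ := corner A hanti hdiag
  set S : Matrix (Fin (m + 2)) (Fin (m + 2)) R := Cᵀ * A * C with hSdef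
  obtain ⟨hCk, hCd⟩ := hCor
  have hSt : Sᵀ = -S := by rw [hSdef]; exact conj_transpose_neg hanti C
  have hSd : ∀ i, S i i = 0 := fun i => by
    rw [hSdef]; exact conj_diag_zero hanti hdiag C i
  have hSsym : ∀ i j, S j i = -S i j := alt_apply_symm hSt
  set e : Fin 2 ⊕ Fin m ≃ Fin (m + 2) :=
    finSumFinEquiv.trans (finCongr (by omega)) with hedef
  have heL : ∀ si : Fin 2, ((e (Sum.inl si) : Fin (m + 2)) : ℕ) = (si : ℕ) := by
    intro si; simp [hedef]
  have heR : ∀ sj : Fin m, ((e (Sum.inr sj) : Fin (m + 2)) : ℕ) = 2 + (sj : ℕ) := by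
    intro sj; simp [hedef]; omega
  set A' : Matrix (Fin m) (Fin m) R :=
    fun i j => S (e (Sum.inr i)) (e (Sum.inr j)) with hA'def
  have hA't : A'ᵀ = -A' := by
    ext i j
    rw [transpose_apply, Matrix.neg_apply, hA'def]
    exact hSsym _ _
  have hA'd : ∀ i, A' i i = 0 := fun i => hSd _
  obtain ⟨B', hB', hP1, hP3⟩ := IHn m (by omega) A' hA't hA'd
  set M' : Matrix (Fin m) (Fin m) R := B'ᵀ * A' * B' with hM'def
  set T : Matrix (Fin 2) (Fin 2) R :=
    fun i j => S (e (Sum.inl i)) (e (Sum.inl j)) with hTdef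
  have hzeroLR : ∀ (si : Fin 2) (tj : Fin m), S (e (Sum.inl si)) (e (Sum.inr tj)) = 0 := by
    intro si tj
    have h2 : 2 ≤ ((e (Sum.inr tj)) : ℕ) := by rw [heR]; omega
    have hsi2 : (si : ℕ) < 2 := si.isLt
    by_cases hv : (si : ℕ) = 0
    · have : e (Sum.inl si) = (0 : Fin (m + 2)) := by
        apply Fin.ext; rw [heL, hv]; rfl
      rw [this]; exact (hCk _ h2).1
    · have : e (Sum.inl si) = (1 : Fin (m + 2)) := by
        apply Fin.ext; rw [heL, Fin.val_one]; omega
      rw [this]; exact (hCk _ h2).2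
  have hSblock : S.submatrix ⇑e ⇑e = fromBlocks T 0 0 A' := by
    ext su tv
    cases su with
    | inl si =>
      cases tv with
      | inl tj => rw [submatrix_apply, Matrix.fromBlocks_apply₁₁, hTdef]
      | inr tj =>
        rw [submatrix_apply, Matrix.fromBlocks_apply₁₂, hzeroLR si tj]
        rfl
    | inr si =>
      cases tv with
      | inl tj =>
        rw [submatrix_apply, Matrix.fromBlocks_apply₂₁, hSsym, hzeroLR tj si]
        simp
      | inr tj => rw [submatrix_apply, Matrix.fromBlocks_apply₂₂, hA'def]
  set D : Matrix (Fin (m + 2)) (Fin (m + 2)) R :=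
    (fromBlocks 1 0 0 B').submatrix ⇑e.symm ⇑e.symm with hDdef
  have hDdet : IsUnit D.det := by
    rw [hDdef, Matrix.det_submatrix_equiv_self e.symm, Matrix.det_fromBlocks_zero₂₁]
    simpa using hB'
  have hKey : (C * D)ᵀ * A * (C * D) = (fromBlocks T 0 0 M').submatrix ⇑e.symm ⇑e.symm := by
    rw [conj_assoc, ← hSdef]
    have hS2 : S = (fromBlocks T 0 0 A').submatrix ⇑e.symm ⇑e.symm := by
      rw [← hSblock, submatrix_submatrix, Equiv.self_comp_symm, submatrix_id_id]
    have hDt : Dᵀ = (fromBlocks 1 0 0 B'ᵀ).submatrix ⇑e.symm ⇑e.symm := by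
      rw [hDdef, transpose_submatrix, fromBlocks_transpose, transpose_one, transpose_zero,
        transpose_zero]
    rw [hS2, hDt, hDdef, submatrix_mul_equiv, submatrix_mul_equiv]
    congr 1
    rw [fromBlocks_multiply, fromBlocks_multiply, hM'def]
    simp [Matrix.mul_assoc]
  have hEntry : ∀ i j, ((C * D)ᵀ * A * (C * D)) i j
      = fromBlocks T 0 0 M' (e.symm i) (e.symm j) := by
    intro i j
    rw [hKey, submatrix_apply]
  refine ⟨C * D, by rw [Matrix.det_mul]; exact hC.mul hDdet, ?_, ?_⟩
  · -- block support condition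
    intro i j hne
    have hij : i ≠ j := by
      rintro rfl
      exact hne (conj_diag_zero hanti hdiag (C * D) i)
    have hvij : (i : ℕ) ≠ (j : ℕ) := fun h => hij (Fin.ext h)
    refine ⟨?_, hvij⟩
    rw [hEntry i j] at hne
    rcases hsi : e.symm i with si | si <;> rcases hsj : e.symm j with sj | sj <;>
      rw [hsi, hsj] at hne
    · have hvi : (i : ℕ) = (si : ℕ) := by
        rw [← heL si, ← hsi, Equiv.apply_symm_apply]
      have hvj : (j : ℕ) = (sj : ℕ) := by
        rw [← heL sj, ← hsj, Equiv.apply_symm_apply]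
      have := si.isLt
      have := sj.isLt
      omega
    · exfalso; rw [Matrix.fromBlocks_apply₁₂] at hne; exact hne rfl
    · exfalso; rw [Matrix.fromBlocks_apply₂₁] at hne; exact hne rfl
    · rw [Matrix.fromBlocks_apply₂₂] at hne
      have hvi : (i : ℕ) = 2 + (si : ℕ) := by
        rw [← heR si, ← hsi, Equiv.apply_symm_apply]
      have hvj : (j : ℕ) = 2 + (sj : ℕ) := by
        rw [← heR sj, ← hsj, Equiv.apply_symm_apply]
      have := (hP1 si sj hne).1
      omega
  · -- divisibility condition
    intro t h0 h1 h2 h3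
    simp only [hEntry]
    rcases t with _ | s
    · have e0 : e.symm ⟨2 * 0, h0⟩ = Sum.inl 0 := by
        rw [Equiv.symm_apply_eq]
        exact (Fin.ext (by rw [heL]; rfl)).symm
      have e1 : e.symm ⟨2 * 0 + 1, h1⟩ = Sum.inl 1 := by
        rw [Equiv.symm_apply_eq]
        exact (Fin.ext (by rw [heL]; rfl)).symm
      have e2 : e.symm ⟨2 * 0 + 2, h2⟩ = Sum.inr ⟨0, by omega⟩ := by
        rw [Equiv.symm_apply_eq]
        exact (Fin.ext (by rw [heR]; rfl)).symm
      have e3 : e.symm ⟨2 * 0 + 3, h3⟩ = Sum.inr ⟨1, by omega⟩ := by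
        rw [Equiv.symm_apply_eq]
        exact (Fin.ext (by rw [heR]; rfl)).symm
      rw [e0, e1, e2, e3, Matrix.fromBlocks_apply₁₁, Matrix.fromBlocks_apply₂₂]
      have hT01 : T 0 1 = S 0 1 := by
        simp only [hTdef]
        have g0 : e (Sum.inl 0) = (0 : Fin (m + 2)) := Fin.ext (by rw [heL]; rfl)
        have g1 : e (Sum.inl 1) = (1 : Fin (m + 2)) := Fin.ext (by rw [heL]; rfl)
        rw [g0, g1]
      rw [hT01, hM'def]
      exact dvd_entries_conj (fun i j => by simp only [hA'def]; exact hCd _ _) B'ᵀ B' _ _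
    · have e0 : e.symm ⟨2 * (s + 1), h0⟩ = Sum.inr ⟨2 * s, by omega⟩ := by
        rw [Equiv.symm_apply_eq]
        exact (Fin.ext (by rw [heR]; show 2 + 2*s = 2*(s+1); ring)).symm
      have e1 : e.symm ⟨2 * (s + 1) + 1, h1⟩ = Sum.inr ⟨2 * s + 1, by omega⟩ := by
        rw [Equiv.symm_apply_eq]
        exact (Fin.ext (by rw [heR]; show 2 + (2*s+1) = 2*(s+1)+1; ring)).symm
      have e2 : e.symm ⟨2 * (s + 1) + 2, h2⟩ = Sum.inr ⟨2 * s + 2, by omega⟩ := by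
        rw [Equiv.symm_apply_eq]
        exact (Fin.ext (by rw [heR]; show 2 + (2*s+2) = 2*(s+1)+2; ring)).symm
      have e3 : e.symm ⟨2 * (s + 1) + 3, h3⟩ = Sum.inr ⟨2 * s + 3, by omega⟩ := by
        rw [Equiv.symm_apply_eq]
        exact (Fin.ext (by rw [heR]; show 2 + (2*s+3) = 2*(s+1)+3; ring)).symm
      rw [e0, e1, e2, e3, Matrix.fromBlocks_apply₂₂, Matrix.fromBlocks_apply₂₂]
      exact hP3 s (by omega) (by omega) (by omega) (by omega)

end MAIN


/-- **Alternating Smith normal form.** Over a PID `R`, an alternating `n × n` matrix `A`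
(`Aᵀ = -A` with zero diagonal) can be transformed by a symmetric change of basis
`S = Bᵀ * A * B`, with `B` invertible, into a block-diagonal matrix with `2 × 2` blocks
`((0, aᵢ), (-aᵢ, 0))` (possibly followed by zero blocks/rows), where `aᵢ ∣ aᵢ₊₁`:
the only possibly nonzero entries of `S` are at positions `(2t, 2t+1)` and `(2t+1, 2t)`,
`S (2t+1) (2t) = - S (2t) (2t+1)`, and `S (2t) (2t+1) ∣ S (2t+2) (2t+3)`. -/
theorem alternating_smith_normal_form {R : Type*} [CommRing R] [IsDomain R]
    [IsPrincipalIdealRing R] {n : ℕ} (A : Matrix (Fin n) (Fin n) R)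
    (hanti : Aᵀ = -A) (hdiag : ∀ i, A i i = 0) :
    ∃ B : Matrix (Fin n) (Fin n) R, IsUnit B.det ∧
      (∀ i j : Fin n, (Bᵀ * A * B) i j ≠ 0 →
        ((i : ℕ) / 2 = (j : ℕ) / 2 ∧ (i : ℕ) ≠ (j : ℕ))) ∧
      (∀ t : ℕ, ∀ (h0 : 2 * t < n) (h1 : 2 * t + 1 < n),
        (Bᵀ * A * B) ⟨2 * t + 1, h1⟩ ⟨2 * t, h0⟩ =
          - (Bᵀ * A * B) ⟨2 * t, h0⟩ ⟨2 * t + 1, h1⟩) ∧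
      (∀ t : ℕ, ∀ (h0 : 2 * t < n) (h1 : 2 * t + 1 < n)
        (h2 : 2 * t + 2 < n) (h3 : 2 * t + 3 < n),
        (Bᵀ * A * B) ⟨2 * t, h0⟩ ⟨2 * t + 1, h1⟩ ∣
          (Bᵀ * A * B) ⟨2 * t + 2, h2⟩ ⟨2 * t + 3, h3⟩) := by
  
  obtain ⟨B, hdet, hP1, hP3⟩ := main_lemma n A hanti hdiag
  refine ⟨B, hdet, hP1, ?_, hP3⟩
  intro t h0 h1
  exact alt_apply_symm (conj_transpose_neg hanti B) _ _
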